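/- arXiv:1305.5575 — 6 statements merged into one kernel-verified Lean document; each statement's English description precedes it below -/
import Mathlib

section
/- Let κ, σ > 0, T > 0 and b ≠ 0 be real numbers, and assume that for every u ∈ [0,T] one has 1/b ≠ (σ²/2)·∫₀^u e^{φ(v)} dv. Then the function β(κ,σ,b;u) = B(κ,σ;u) + e^{φ(u)} · (1/b − (σ²/2)∫₀^u e^{φ(v)} dv)^{−1} satisfies β(κ,σ,b;0) = b and, for every u ∈ [0,T], β′(κ,σ,b;u) = −κ·β(κ,σ,b;u) + (σ²/2)·β(κ,σ,b;u)² − 1. -/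
open Real MeasureTheory

/-- For κ, σ > 0, T > 0 and b ≠ 0, with
`B(κ,σ;u) = −2(e^{ϖu} − 1)/(2ϖ + (κ+ϖ)(e^{ϖu} − 1))`, `ϖ = √(κ² + 2σ²)`,
`φ(u) = σ²∫₀ᵘ B(v)dv − κu`, and assuming `1/b ≠ (σ²/2)∫₀ᵘ e^{φ(v)}dv` for every
`u ∈ [0,T]`, the function
`β(u) = B(u) + e^{φ(u)}·(1/b − (σ²/2)∫₀ᵘ e^{φ(v)}dv)⁻¹`
satisfies `β 0 = b` and solves `β′ = −κβ + (σ²/2)β² − 1` on `[0,T]`. -/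
theorem riccati_beta_explicit_solution (κ σ T b ϖ : ℝ) (B φ β : ℝ → ℝ)
    (hκ : 0 < κ) (hσ : 0 < σ) (hT : 0 < T) (hb : b ≠ 0)
    (hϖ : ϖ = Real.sqrt (κ ^ 2 + 2 * σ ^ 2))
    (hB : ∀ u : ℝ, B u =
      -(2 * (Real.exp (ϖ * u) - 1)) / (2 * ϖ + (κ + ϖ) * (Real.exp (ϖ * u) - 1)))
    (hφ : ∀ u : ℝ, φ u = σ ^ 2 * (∫ v in (0:ℝ)..u, B v) - κ * u)
    (hβ : ∀ u : ℝ, β u = B u +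
      Real.exp (φ u) * (1 / b - σ ^ 2 / 2 * ∫ v in (0:ℝ)..u, Real.exp (φ v))⁻¹)
    (hne : ∀ u ∈ Set.Icc (0:ℝ) T,
      1 / b ≠ σ ^ 2 / 2 * ∫ v in (0:ℝ)..u, Real.exp (φ v)) :
    β 0 = b ∧
    ∀ u ∈ Set.Icc (0:ℝ) T,
      HasDerivAt β (-κ * β u + σ ^ 2 / 2 * (β u) ^ 2 - 1) u := by
  have hϖ2 : ϖ ^ 2 = κ ^ 2 + 2 * σ ^ 2 := by
    rw [hϖ, Real.sq_sqrt (by positivity)]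
  have hϖpos : 0 < ϖ := by
    rw [hϖ]; exact Real.sqrt_pos.2 (by positivity)
  have hκϖ : κ < ϖ := by nlinarith
  -- denominator positivity
  have hD : ∀ u : ℝ, 0 < 2 * ϖ + (κ + ϖ) * (Real.exp (ϖ * u) - 1) := by
    intro u
    nlinarith [Real.exp_pos (ϖ * u), mul_pos (show (0:ℝ) < κ + ϖ by linarith)
      (Real.exp_pos (ϖ * u))]
  -- B solves the Riccati equation
  have hBderiv : ∀ u : ℝ, HasDerivAt B (σ ^ 2 / 2 * (B u) ^ 2 - κ * B u - 1) u := by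
    intro u
    have hE : HasDerivAt (fun u : ℝ => Real.exp (ϖ * u)) (ϖ * Real.exp (ϖ * u)) u := by
      simpa [mul_comm] using ((hasDerivAt_id u).const_mul ϖ).exp
    have hN : HasDerivAt (fun u : ℝ => -(2 * (Real.exp (ϖ * u) - 1)))
        (-(2 * (ϖ * Real.exp (ϖ * u)))) u := ((hE.sub_const 1).const_mul 2).neg
    have hDd : HasDerivAt (fun u : ℝ => 2 * ϖ + (κ + ϖ) * (Real.exp (ϖ * u) - 1))
        ((κ + ϖ) * (ϖ * Real.exp (ϖ * u))) u := by
      simpa using (((hE.sub_const 1).const_mul (κ + ϖ)).const_add (2 * ϖ))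
    have hq := hN.div hDd (hD u).ne'
    have hBeq : B = fun u => -(2 * (Real.exp (ϖ * u) - 1)) /
        (2 * ϖ + (κ + ϖ) * (Real.exp (ϖ * u) - 1)) := funext hB
    have hval : (-(2 * (ϖ * Real.exp (ϖ * u))) * (2 * ϖ + (κ + ϖ) * (Real.exp (ϖ * u) - 1)) -
        -(2 * (Real.exp (ϖ * u) - 1)) * ((κ + ϖ) * (ϖ * Real.exp (ϖ * u)))) /
      (2 * ϖ + (κ + ϖ) * (Real.exp (ϖ * u) - 1)) ^ 2
        = σ ^ 2 / 2 * (B u) ^ 2 - κ * B u - 1 := by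
      rw [hB]
      have hDne := (hD u).ne'
      have hs : σ ^ 2 = (ϖ ^ 2 - κ ^ 2) / 2 := by linarith
      rw [hs]
      field_simp
      ring
    have hq' : HasDerivAt B
        ((-(2 * (ϖ * Real.exp (ϖ * u))) * (2 * ϖ + (κ + ϖ) * (Real.exp (ϖ * u) - 1)) -
          -(2 * (Real.exp (ϖ * u) - 1)) * ((κ + ϖ) * (ϖ * Real.exp (ϖ * u)))) /
        (2 * ϖ + (κ + ϖ) * (Real.exp (ϖ * u) - 1)) ^ 2) u := by
      rw [hBeq]; exact hq
    rwa [hval] at hq'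
  have hBcont : Continuous B :=
    continuous_iff_continuousAt.2 fun u => (hBderiv u).continuousAt
  -- φ derivative
  have hφderiv : ∀ u : ℝ, HasDerivAt φ (σ ^ 2 * B u - κ) u := by
    intro u
    have hI : HasDerivAt (fun u : ℝ => ∫ v in (0:ℝ)..u, B v) (B u) u :=
      (hBcont.integral_hasStrictDerivAt 0 u).hasDerivAt
    have : HasDerivAt (fun u : ℝ => σ ^ 2 * (∫ v in (0:ℝ)..u, B v) - κ * u)
        (σ ^ 2 * B u - κ * 1) u :=
      (hI.const_mul (σ ^ 2)).sub ((hasDerivAt_id u).const_mul κ)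
    have hφeq : φ = fun u => σ ^ 2 * (∫ v in (0:ℝ)..u, B v) - κ * u := funext hφ
    rw [hφeq]
    simpa using this
  have hφcont : Continuous φ :=
    continuous_iff_continuousAt.2 fun u => (hφderiv u).continuousAt
  have hexpφ : ∀ u : ℝ, HasDerivAt (fun u => Real.exp (φ u))
      (Real.exp (φ u) * (σ ^ 2 * B u - κ)) u := fun u => (hφderiv u).exp
  -- g and its derivative
  set g : ℝ → ℝ := fun u => 1 / b - σ ^ 2 / 2 * ∫ v in (0:ℝ)..u, Real.exp (φ v) with hg
  have hgderiv : ∀ u : ℝ, HasDerivAt g (-(σ ^ 2 / 2 * Real.exp (φ u))) u := by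
    intro u
    have hI : HasDerivAt (fun u : ℝ => ∫ v in (0:ℝ)..u, Real.exp (φ v))
        (Real.exp (φ u)) u :=
      ((Real.continuous_exp.comp hφcont).integral_hasStrictDerivAt 0 u).hasDerivAt
    exact (hI.const_mul (σ ^ 2 / 2)).const_sub (1 / b)
  constructor
  · rw [hβ 0, hB 0, hφ 0]
    simp [intervalIntegral.integral_same, hb]
  · intro u hu
    have hgne : g u ≠ 0 := sub_ne_zero.2 (hne u hu)
    have hβeq : β = fun u => B u + Real.exp (φ u) * (g u)⁻¹ := funext hβ
    have hinv : HasDerivAt (fun u => (g u)⁻¹)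
        (-(-(σ ^ 2 / 2 * Real.exp (φ u))) / (g u) ^ 2) u := (hgderiv u).inv hgne
    have hd : HasDerivAt β
        ((σ ^ 2 / 2 * (B u) ^ 2 - κ * B u - 1) +
          (Real.exp (φ u) * (σ ^ 2 * B u - κ) * (g u)⁻¹ +
            Real.exp (φ u) * (-(-(σ ^ 2 / 2 * Real.exp (φ u))) / (g u) ^ 2))) u := by
      rw [hβeq]
      exact (hBderiv u).add ((hexpφ u).mul hinv)
    convert hd using 1
    rw [hβ u]
    have hgu : (1 / b - σ ^ 2 / 2 * ∫ v in (0:ℝ)..u, Real.exp (φ v)) = g u := rfl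
    rw [hgu]
    field_simp
    ring
end

section
/- For all real numbers κ > 0, σ > 0 and every u ≥ 0, with ϖ = √(κ² + 2σ²) and φ(u) = σ²∫₀^u B(κ,σ;v) dv − κu, one has the closed-form identity e^{φ(u)} = e^{ϖu} · (2ϖ / ((ϖ−κ) + e^{ϖu}(κ+ϖ)))². -/
open Real MeasureTheory

/-- For κ, σ > 0 and u ≥ 0, with `ϖ = √(κ² + 2σ²)`,
`B(κ,σ;v) = −2(e^{ϖv} − 1)/(2ϖ + (κ+ϖ)(e^{ϖv} − 1))` and
`φ(u) = σ²∫₀ᵘ B(v)dv − κu`, one has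
`e^{φ(u)} = e^{ϖu}·(2ϖ/((ϖ−κ) + e^{ϖu}(κ+ϖ)))²`. -/
theorem exp_phi_closed_form (κ σ ϖ : ℝ) (B φ : ℝ → ℝ)
    (hκ : 0 < κ) (hσ : 0 < σ)
    (hϖ : ϖ = Real.sqrt (κ ^ 2 + 2 * σ ^ 2))
    (hB : ∀ u : ℝ, B u =
      -(2 * (Real.exp (ϖ * u) - 1)) / (2 * ϖ + (κ + ϖ) * (Real.exp (ϖ * u) - 1)))
    (hφ : ∀ u : ℝ, φ u = σ ^ 2 * (∫ v in (0:ℝ)..u, B v) - κ * u) :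
    ∀ u : ℝ, 0 ≤ u →
      Real.exp (φ u) = Real.exp (ϖ * u) *
        (2 * ϖ / ((ϖ - κ) + Real.exp (ϖ * u) * (κ + ϖ))) ^ 2 := by
  intro u hu
  have hϖpos : 0 < ϖ := by
    rw [hϖ]; exact Real.sqrt_pos.mpr (by positivity)
  have hϖsq : ϖ ^ 2 = κ ^ 2 + 2 * σ ^ 2 := by
    rw [hϖ]; exact Real.sq_sqrt (by positivity)
  have hκϖ : κ < ϖ := by nlinarith
  set D : ℝ → ℝ := fun v => (ϖ - κ) + (κ + ϖ) * Real.exp (ϖ * v) with hDdef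
  have hD : ∀ v : ℝ, 0 < D v := fun v => by
    have := Real.exp_pos (ϖ * v)
    have : 0 < (κ + ϖ) * Real.exp (ϖ * v) := by positivity
    simp only [hDdef]; nlinarith
  have hBD : ∀ v, B v = -(2 * (Real.exp (ϖ * v) - 1)) / D v := by
    intro v; rw [hB v]; congr 1; simp only [hDdef]; ring
  set G : ℝ → ℝ := fun v => (ϖ + κ) * v - 2 * Real.log (D v) + 2 * Real.log (2 * ϖ)
    with hGdef
  have hG : ∀ v : ℝ, HasDerivAt G (σ ^ 2 * B v) v := by
    intro v
    have he : HasDerivAt (fun v : ℝ => Real.exp (ϖ * v))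
        (Real.exp (ϖ * v) * (ϖ * 1)) v := ((hasDerivAt_id v).const_mul ϖ).exp
    have hDderiv : HasDerivAt D ((κ + ϖ) * (Real.exp (ϖ * v) * (ϖ * 1))) v :=
      (he.const_mul (κ + ϖ)).const_add (ϖ - κ)
    have hlog := hDderiv.log (ne_of_gt (hD v))
    have h1 : HasDerivAt G
        ((ϖ + κ) * 1 - 2 * ((κ + ϖ) * (Real.exp (ϖ * v) * (ϖ * 1)) / D v)) v :=
      (((hasDerivAt_id v).const_mul (ϖ + κ)).sub (hlog.const_mul 2)).add_const _
    convert h1 using 1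
    rw [hBD v]
    have hDne := ne_of_gt (hD v)
    field_simp
    simp only [hDdef]
    linear_combination ((1 - Real.exp (ϖ * v)) + (Real.exp (ϖ * v) - 1) * ((Real.exp (ϖ * v) + 1) * ϖ + (Real.exp (ϖ * v) - 1) * κ + 1) - (1 - Real.exp (ϖ * v) - 2 * Real.exp (ϖ * v) * κ + Real.exp (ϖ * v) ^ 2 * ϖ + Real.exp (ϖ * v) ^ 2 * κ - ϖ + κ)) * hϖsq
  have hcont : Continuous (fun v => σ ^ 2 * B v) := by
    have : Continuous B := by
      have : B = fun v => -(2 * (Real.exp (ϖ * v) - 1)) / D v := funext hBD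
      rw [this]
      exact Continuous.div (by continuity) (by continuity) (fun v => ne_of_gt (hD v))
    exact continuous_const.mul this
  have hint : ∫ v in (0:ℝ)..u, σ ^ 2 * B v = G u - G 0 :=
    intervalIntegral.integral_eq_sub_of_hasDerivAt (fun v _ => hG v)
      (hcont.intervalIntegrable 0 u)
  have hG0 : G 0 = 0 := by
    simp only [hGdef, hDdef, mul_zero, Real.exp_zero]
    have : ϖ - κ + (κ + ϖ) * 1 = 2 * ϖ := by ring
    rw [this]; ring
  rw [hφ u, ← intervalIntegral.integral_const_mul, hint, hG0]
  have hrhs : (2 * ϖ / ((ϖ - κ) + Real.exp (ϖ * u) * (κ + ϖ))) ^ 2 =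
      Real.exp (2 * Real.log (2 * ϖ) - 2 * Real.log (D u)) := by
    have hDu := hD u
    have h2ϖ : (0:ℝ) < 2 * ϖ := by linarith
    have : (ϖ - κ) + Real.exp (ϖ * u) * (κ + ϖ) = D u := by simp only [hDdef]; ring
    have e1 : 2 * Real.log (2 * ϖ) = Real.log ((2 * ϖ) ^ 2) := by
      rw [Real.log_pow]; push_cast; ring
    have e2 : 2 * Real.log (D u) = Real.log ((D u) ^ 2) := by
      rw [Real.log_pow]; push_cast; ring
    rw [this, e1, e2, Real.exp_sub, Real.exp_log (pow_pos h2ϖ 2),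
      Real.exp_log (pow_pos hDu 2), div_pow]
  rw [hrhs, ← Real.exp_add]
  congr 1
  simp only [hGdef]
  ring
end

section
/- Let κ, σ > 0, T > 0, a_ℓ > 0 and b ≠ 0 be real numbers, and assume that for every u ∈ [0,T] one has a_ℓ/b ≠ (σ²a_ℓ/2)·∫₀^u e^{φ_{a_ℓ}(v)} dv, where φ_{a_ℓ} is the function φ formed with parameters (κ, σ√a_ℓ). Then the function β̂(u) := a_ℓ · β(κ, σ√a_ℓ, b/a_ℓ; u) satisfies β̂(0) = b and, for every u ∈ [0,T], β̂′(u) = −κ·β̂(u) + (σ²/2)·β̂(u)² − a_ℓ. -/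
open Real MeasureTheory

/-- Scaling lemma for the Riccati equation. Let κ, σ > 0, T > 0,
`a_ℓ > 0` and `b ≠ 0`. Let `σs = σ√a_ℓ`, `ϖs = √(κ² + 2σs²)`, and let `Bs`, `φs`,
`βs` be the functions `B(κ, σ√a_ℓ; ·)`, `φ` and `β(κ, σ√a_ℓ, b/a_ℓ; ·)` formed with
the parameters `(κ, σ√a_ℓ)`. Assume `a_ℓ/b ≠ (σ²a_ℓ/2)∫₀ᵘ e^{φs(v)}dv` for all
`u ∈ [0,T]`. Then `β̂(u) := a_ℓ·β(κ, σ√a_ℓ, b/a_ℓ; u)` satisfies `β̂(0) = b` and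
`β̂′ = −κβ̂ + (σ²/2)β̂² − a_ℓ` on `[0,T]`. -/
theorem riccati_scaling_lemma (κ σ T aℓ b σs ϖs : ℝ) (Bs φs βs βhat : ℝ → ℝ)
    (hκ : 0 < κ) (hσ : 0 < σ) (hT : 0 < T) (haℓ : 0 < aℓ) (hb : b ≠ 0)
    (hσs : σs = σ * Real.sqrt aℓ)
    (hϖs : ϖs = Real.sqrt (κ ^ 2 + 2 * σs ^ 2))
    (hBs : ∀ u : ℝ, Bs u =
      -(2 * (Real.exp (ϖs * u) - 1)) / (2 * ϖs + (κ + ϖs) * (Real.exp (ϖs * u) - 1)))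
    (hφs : ∀ u : ℝ, φs u = σs ^ 2 * (∫ v in (0:ℝ)..u, Bs v) - κ * u)
    (hβs : ∀ u : ℝ, βs u = Bs u +
      Real.exp (φs u) *
        (1 / (b / aℓ) - σs ^ 2 / 2 * ∫ v in (0:ℝ)..u, Real.exp (φs v))⁻¹)
    (hne : ∀ u ∈ Set.Icc (0:ℝ) T,
      aℓ / b ≠ σ ^ 2 * aℓ / 2 * ∫ v in (0:ℝ)..u, Real.exp (φs v))
    (hβhat : ∀ u : ℝ, βhat u = aℓ * βs u) :
    βhat 0 = b ∧
    ∀ u ∈ Set.Icc (0:ℝ) T,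
      HasDerivAt βhat (-κ * βhat u + σ ^ 2 / 2 * (βhat u) ^ 2 - aℓ) u := by
  have hσs_pos : 0 < σs := by
    rw [hσs]; positivity
  have hσs2 : σs ^ 2 = σ ^ 2 * aℓ := by
    rw [hσs, mul_pow, Real.sq_sqrt haℓ.le]
  have hϖsq : ϖs ^ 2 = κ ^ 2 + 2 * σs ^ 2 := by
    rw [hϖs, Real.sq_sqrt (by positivity)]
  have hϖκ : κ < ϖs := by
    have h1 : 0 ≤ ϖs := hϖs ▸ Real.sqrt_nonneg _
    nlinarith [hϖsq, sq_nonneg σs, hσs_pos]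
  have hϖ_pos : 0 < ϖs := hκ.trans hϖκ
  -- the denominator of Bs is everywhere positive
  have hD : ∀ u : ℝ, 0 < 2 * ϖs + (κ + ϖs) * (Real.exp (ϖs * u) - 1) := by
    intro u
    have hE : 0 < Real.exp (ϖs * u) := Real.exp_pos _
    nlinarith [hϖκ, hκ]
  -- Bs satisfies the normalized Riccati equation
  have hBderiv : ∀ u : ℝ, HasDerivAt Bs (-κ * Bs u + σs ^ 2 / 2 * (Bs u) ^ 2 - 1) u := by
    intro u
    have hE : HasDerivAt (fun x : ℝ => Real.exp (ϖs * x)) (ϖs * Real.exp (ϖs * u)) u := by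
      simpa [mul_comm] using ((hasDerivAt_id u).const_mul ϖs).exp
    have hN : HasDerivAt (fun x : ℝ => -(2 * (Real.exp (ϖs * x) - 1)))
        (-(2 * (ϖs * Real.exp (ϖs * u)))) u := ((hE.sub_const 1).const_mul 2).neg
    have hDd : HasDerivAt (fun x : ℝ => 2 * ϖs + (κ + ϖs) * (Real.exp (ϖs * x) - 1))
        ((κ + ϖs) * (ϖs * Real.exp (ϖs * u))) u :=
      ((hE.sub_const 1).const_mul (κ + ϖs)).const_add (2 * ϖs)
    have hdiv := hN.div hDd (ne_of_gt (hD u))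
    have hBfun : Bs = fun x : ℝ => -(2 * (Real.exp (ϖs * x) - 1)) /
        (2 * ϖs + (κ + ϖs) * (Real.exp (ϖs * x) - 1)) := funext hBs
    rw [hBfun]
    refine hdiv.congr_deriv ?_
    beta_reduce
    have hDne := ne_of_gt (hD u)
    have hs2 : σs ^ 2 = (ϖs ^ 2 - κ ^ 2) / 2 := by linarith [hϖsq]
    rw [hs2]
    field_simp
    ring
  have hBcont : Continuous Bs :=
    continuous_iff_continuousAt.2 fun u => (hBderiv u).differentiableAt.continuousAt
  -- φs derivative
  have hφderiv : ∀ u : ℝ, HasDerivAt φs (σs ^ 2 * Bs u - κ) u := by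
    intro u
    have hI : HasDerivAt (fun x : ℝ => ∫ v in (0:ℝ)..x, Bs v) (Bs u) u :=
      intervalIntegral.integral_hasDerivAt_right (hBcont.intervalIntegrable 0 u)
        (hBcont.stronglyMeasurableAtFilter _ _) hBcont.continuousAt
    have := (hI.const_mul (σs ^ 2)).sub ((hasDerivAt_id u).const_mul κ)
    rw [funext hφs]
    exact this.congr_deriv (by ring)
  have hφcont : Continuous φs :=
    continuous_iff_continuousAt.2 fun u => (hφderiv u).differentiableAt.continuousAt
  have hecont : Continuous fun u : ℝ => Real.exp (φs u) := Real.continuous_exp.comp hφcont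
  have hgderiv : ∀ u : ℝ, HasDerivAt (fun x : ℝ => ∫ v in (0:ℝ)..x, Real.exp (φs v))
      (Real.exp (φs u)) u := fun u =>
    intervalIntegral.integral_hasDerivAt_right (hecont.intervalIntegrable 0 u)
      (hecont.stronglyMeasurableAtFilter _ _) hecont.continuousAt
  -- rewrite βs with h u := aℓ/b - σs²/2 * g u
  have hβs' : ∀ u : ℝ, βs u = Bs u +
      Real.exp (φs u) *
        (aℓ / b - σs ^ 2 / 2 * ∫ v in (0:ℝ)..u, Real.exp (φs v))⁻¹ := by
    intro u; rw [hβs u, one_div_div]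
  have hhne : ∀ u ∈ Set.Icc (0:ℝ) T,
      aℓ / b - σs ^ 2 / 2 * (∫ v in (0:ℝ)..u, Real.exp (φs v)) ≠ 0 := by
    intro u hu
    have := hne u hu
    rw [sub_ne_zero, hσs2]
    intro hcontr
    apply this
    linarith [hcontr]
  -- βs(0) and βhat(0)
  have hB0 : Bs 0 = 0 := by rw [hBs 0]; simp
  have hβs0 : βs 0 = b / aℓ := by
    rw [hβs' 0]
    simp [hB0, hφs 0]
  constructor
  · rw [hβhat 0, hβs0, mul_div_cancel₀ _ haℓ.ne']
  · intro u hu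
    have hhu := hhne u hu
    -- derivative of h
    have hhderiv : HasDerivAt
        (fun x : ℝ => aℓ / b - σs ^ 2 / 2 * ∫ v in (0:ℝ)..x, Real.exp (φs v))
        (-(σs ^ 2 / 2 * Real.exp (φs u))) u :=
      (((hgderiv u).const_mul (σs ^ 2 / 2))).const_sub (aℓ / b)
    have hrderiv := ((hφderiv u).exp).mul (hhderiv.inv hhu)
    have hβsderiv : HasDerivAt βs (-κ * βs u + σs ^ 2 / 2 * (βs u) ^ 2 - 1) u := by
      have htot := (hBderiv u).add hrderiv
      rw [funext hβs']
      refine htot.congr_deriv ?_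
      simp only [Pi.inv_apply]
      beta_reduce
      set w := aℓ / b - σs ^ 2 / 2 * ∫ v in (0:ℝ)..u, Real.exp (φs v) with hw
      field_simp
      ring
    have := hβsderiv.const_mul aℓ
    rw [← funext hβhat] at this
    refine this.congr_deriv ?_
    rw [hβhat u, hσs2]
    ring
end

section
/- For all real numbers κ > 0, σ > 0 and T > 0, with ϖ = √(κ² + 2σ²) (so that ϖ > κ), one has the closed-form identity ∫₀^T B(κ,σ;u) du = 2T/(ϖ−κ) + (4/(ϖ²−κ²)) · log( 2ϖ / ((1+e^{ϖT})ϖ + (e^{ϖT}−1)κ) ). -/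
open Real MeasureTheory

/-- For κ, σ > 0 and T > 0, with `ϖ = √(κ² + 2σ²)` (so that ϖ > κ)
and `B(κ,σ;u) = −2(e^{ϖu} − 1)/(2ϖ + (κ+ϖ)(e^{ϖu} − 1))`, one has
`∫₀ᵀ B(u)du = 2T/(ϖ−κ) + (4/(ϖ²−κ²))·log(2ϖ/((1+e^{ϖT})ϖ + (e^{ϖT}−1)κ))`. -/
theorem integral_B_closed_form (κ σ T ϖ : ℝ) (B : ℝ → ℝ)
    (hκ : 0 < κ) (hσ : 0 < σ) (hT : 0 < T)
    (hϖ : ϖ = Real.sqrt (κ ^ 2 + 2 * σ ^ 2))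
    (hB : ∀ u : ℝ, B u =
      -(2 * (Real.exp (ϖ * u) - 1)) / (2 * ϖ + (κ + ϖ) * (Real.exp (ϖ * u) - 1))) :
    (∫ u in (0:ℝ)..T, B u)
      = 2 * T / (ϖ - κ) +
        4 / (ϖ ^ 2 - κ ^ 2) *
          Real.log (2 * ϖ /
            ((1 + Real.exp (ϖ * T)) * ϖ + (Real.exp (ϖ * T) - 1) * κ)) := by
  have hϖκ : κ < ϖ := by
    rw [hϖ]
    have : κ = Real.sqrt (κ ^ 2) := by
      rw [Real.sqrt_sq hκ.le]
    nth_rewrite 1 [this]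
    apply Real.sqrt_lt_sqrt (by positivity)
    nlinarith [sq_nonneg σ]
  have hϖ0 : 0 < ϖ := hκ.trans hϖκ
  have hmk : 0 < ϖ - κ := by linarith
  have hpk : 0 < ϖ + κ := by linarith
  -- denominator
  set D : ℝ → ℝ := fun u => (1 + Real.exp (ϖ * u)) * ϖ + (Real.exp (ϖ * u) - 1) * κ with hD
  have hDpos : ∀ u, 0 < D u := by
    intro u
    have he : 0 < Real.exp (ϖ * u) := Real.exp_pos _
    have : D u = (ϖ - κ) + (ϖ + κ) * Real.exp (ϖ * u) := by simp [hD]; ring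
    rw [this]; positivity
  set F : ℝ → ℝ := fun u => 2 * u / (ϖ - κ) +
      4 / (ϖ ^ 2 - κ ^ 2) * Real.log (2 * ϖ / D u) with hF
  have hderiv : ∀ u ∈ Set.uIcc (0:ℝ) T, HasDerivAt F (B u) u := by
    intro u _
    have he : HasDerivAt (fun u => Real.exp (ϖ * u)) (ϖ * Real.exp (ϖ * u)) u := by
      have := (Real.hasDerivAt_exp (ϖ * u)).comp u ((hasDerivAt_id u).const_mul ϖ)
      simpa [mul_comm, Function.comp_def] using this
    have hDd : HasDerivAt D (ϖ * Real.exp (ϖ * u) * (ϖ + κ)) u := by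
      have h1 : HasDerivAt (fun u => (1 + Real.exp (ϖ * u)) * ϖ + (Real.exp (ϖ * u) - 1) * κ)
          ((ϖ * Real.exp (ϖ * u)) * ϖ + (ϖ * Real.exp (ϖ * u)) * κ) u := by
        exact (((he.const_add 1).mul_const ϖ).add ((he.sub_const 1).mul_const κ))
      have : (ϖ * Real.exp (ϖ * u)) * ϖ + (ϖ * Real.exp (ϖ * u)) * κ
          = ϖ * Real.exp (ϖ * u) * (ϖ + κ) := by ring
      rw [this] at h1
      exact h1
    have hlog : HasDerivAt (fun u => Real.log (2 * ϖ / D u))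
        (-(ϖ * Real.exp (ϖ * u) * (ϖ + κ)) / D u) u := by
      have hrw : (fun u => Real.log (2 * ϖ / D u))
          = fun u => Real.log (2 * ϖ) - Real.log (D u) := by
        funext v
        rw [Real.log_div (by positivity) (hDpos v).ne']
      rw [hrw]
      have := ((hDd.log (hDpos u).ne')).const_sub (Real.log (2 * ϖ))
      simpa [neg_div] using this
    have hlin : HasDerivAt (fun u : ℝ => 2 * u / (ϖ - κ)) (2 / (ϖ - κ)) u := by
      have := ((hasDerivAt_id u).const_mul 2).div_const (ϖ - κ)
      simpa using this
    have htot := hlin.add ((hlog.const_mul (4 / (ϖ ^ 2 - κ ^ 2))))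
    have heq : 2 / (ϖ - κ) + 4 / (ϖ ^ 2 - κ ^ 2) * (-(ϖ * Real.exp (ϖ * u) * (ϖ + κ)) / D u)
        = B u := by
      rw [hB u]
      have hDu : D u = 2 * ϖ + (κ + ϖ) * (Real.exp (ϖ * u) - 1) := by simp [hD]; ring
      have hne : (2 * ϖ + (κ + ϖ) * (Real.exp (ϖ * u) - 1)) ≠ 0 := by
        rw [← hDu]; exact (hDpos u).ne'
      rw [hDu]
      have h2 : ϖ ^ 2 - κ ^ 2 ≠ 0 := by nlinarith
      field_simp
      ring
    rw [← heq]
    exact htot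
  have hcont : ContinuousOn B (Set.uIcc 0 T) := by
    have : Continuous B := by
      have hBe : B = fun u => -(2 * (Real.exp (ϖ * u) - 1)) /
          (2 * ϖ + (κ + ϖ) * (Real.exp (ϖ * u) - 1)) := funext hB
      rw [hBe]
      apply Continuous.div (by continuity) (by continuity)
      intro u
      have hDu : D u = 2 * ϖ + (κ + ϖ) * (Real.exp (ϖ * u) - 1) := by simp [hD]; ring
      rw [← hDu]; exact (hDpos u).ne'
    exact this.continuousOn
  have := intervalIntegral.integral_eq_sub_of_hasDerivAt hderiv
    (hcont.intervalIntegrable)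
  rw [this]
  have hF0 : F 0 = 0 := by
    have h1 : D 0 = 2 * ϖ := by simp only [hD, mul_zero, Real.exp_zero]; ring
    have h2 : (2 * ϖ) / (2 * ϖ) = 1 := div_self (by positivity)
    simp [hF, h1, h2]
  rw [hF0]
  simp [hF, hD]
end

section
/- Let T > 0, let a_ℓ, b_ℓ, c_ℓ, α_A, α_B, κ_A, κ_B, σ_A, σ_B ∈ ℝ, let c_A, c_B, d_A, d_B ≥ 0, let λ̂_A, λ̂_B, λ̂_c ≥ 0 and set λ = λ̂_A + λ̂_B + λ̂_c. Let F̃_A, F̃_B be probability measures on [0,∞) and F_{AB} a probability measure on [0,∞)², each with finite first moment, and define Φ(θ_A,θ_B) = ∫ e^{θ_A y_A + θ_B y_B} F_{AB}(dy_A,dy_B), Φ̃_A(θ) = ∫ e^{θy} F̃_A(dy), Φ̃_B(θ) = ∫ e^{θy} F̃_B(dy), together with the partial derivatives Φ_1(θ_A,θ_B) = ∫ y_A e^{θ_A y_A + θ_B y_B} F_{AB}(dy), Φ_2(θ_A,θ_B) = ∫ y_B e^{θ_A y_A + θ_B y_B} F_{AB}(dy), Φ̃_A′(θ) = ∫ y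 e^{θy} F̃_A(dy), Φ̃_B′(θ) = ∫ y e^{θy} F̃_B(dy). Suppose β_A, β_B, β_{AB}, θ_A, θ_B, θ_{AB} : [0,T] → ℝ are differentiable, β_A(u) ≤ 0 and β_B(u) ≤ 0 for all u ∈ [0,T], and they satisfy on [0,T]: β_A′ = −κ_A β_A + (σ_A²/2) β_A² − a_ℓ; β_B′ = −κ_B β_B + (σ_B²/2) β_B² − b_ℓ; β_{AB}′(u) = α_A β_A(u) + α_B β_B(u) − λ − c_ℓ + λ̂_c Φ(c_Aβ_A(u), c_Bβ_B(u)) + λ̂_A Φ̃_A(d_Aβ_A(u)) + λ̂_B Φ̃_B(d_Bβ_B(u)); θ_A′ = −κ_A θ_A + σ_A² θ_A β_A; θ_B′ = −κ_B θ_B + σ_B² θ_B β_B; θ_{AB}′(u) = α_A θ_A(u) + α_B θ_B(u) + λ̂_c c_A θ_A(u) Φ_1(c_Aβ_A(u), c_Bβ_B(u)) + λ̂_c c_B θ_B(u) Φ_2(c_Aβ_A(u), c_Bβ_B(u)) + λ̂_A d_A θ_A(u) Φ̃_A′(d_Aβ_A(u)) + λ̂_B d_B θ_B(u) Φ̃_B′(d_Bβ_B(u)).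 Define f(t, x_A, x_B) = ( θ_{AB}(T−t) + θ_A(T−t)x_A + θ_B(T−t)x_B ) · exp( β_{AB}(T−t) + β_A(T−t)x_A + β_B(T−t)x_B ). Then for every t ∈ [0,T] and all x_A, x_B ≥ 0: ∂f/∂t(t,x_A,x_B) + (σ_A² x_A/2)·∂²f/∂x_A²(t,x_A,x_B) + (σ_B² x_B/2)·∂²f/∂x_B²(t,x_A,x_B) + (α_A − κ_A x_A)·∂f/∂x_A(t,x_A,x_B) + (α_B − κ_B x_B)·∂f/∂x_B(t,x_A,x_B) − λ f(t,x_A,x_B) + λ̂_A ∫ f(t, x_A + d_A y, x_B) F̃_A(dy) + λ̂_B ∫ f(t, x_A, x_B + d_B y) F̃_B(dy) + λ̂_c ∫ f(t, x_A + c_A y_A, x_B + c_B y_B) F_{AB}(dy_A, dy_B) = (a_ℓ x_A + b_ℓ x_B + c_ℓ) f(t, x_A, x_B). -/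
open MeasureTheory Real Set

lemma hAE (p q r s x : ℝ) :
    HasDerivAt (fun y => (p + q * y) * Real.exp (r + s * y))
      ((q + (p + q * x) * s) * Real.exp (r + s * x)) x := by
  have h1 : HasDerivAt (fun y : ℝ => p + q * y) q x := by
    exact ((hasDerivAt_const x p).add ((hasDerivAt_id x).const_mul q)).congr_deriv (by ring)
  have h2 : HasDerivAt (fun y : ℝ => r + s * y) s x := by
    exact ((hasDerivAt_const x r).add ((hasDerivAt_id x).const_mul s)).congr_deriv (by ring)
  have := h1.mul h2.exp
  exact this.congr_deriv (by ring)

lemma dAE (p q r s x : ℝ) :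
    deriv (fun y => (p + q * y) * Real.exp (r + s * y)) x
      = (q + (p + q * x) * s) * Real.exp (r + s * x) := (hAE p q r s x).deriv

lemma d2AE (p q r s x : ℝ) :
    deriv (fun z => deriv (fun y => (p + q * y) * Real.exp (r + s * y)) z) x
      = (2 * q * s + (p + q * x) * s ^ 2) * Real.exp (r + s * x) := by
  have h : (fun z => deriv (fun y => (p + q * y) * Real.exp (r + s * y)) z)
      = fun z => ((q + p * s) + q * s * z) * Real.exp (r + s * z) :=
    funext fun z => (dAE p q r s z).trans (by ring)
  rw [h, dAE]; ring

lemma integ_exp (μ : Measure ℝ) [IsProbabilityMeasure μ]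
    (h0 : μ (Set.Iio (0:ℝ)) = 0) (c : ℝ) (hc : c ≤ 0) :
    Integrable (fun y => Real.exp (c * y)) μ := by
  have hae : ∀ᵐ y ∂μ, 0 ≤ y := by
    rw [ae_iff]
    convert h0 using 2
    ext y; simp [not_le, Set.mem_Iio]
  refine Integrable.mono' (integrable_const 1)
    ((measurable_const.mul measurable_id).exp.aestronglyMeasurable) ?_
  filter_upwards [hae] with y hy
  rw [Real.norm_eq_abs, abs_of_pos (Real.exp_pos _)]
  exact Real.exp_le_one_iff.mpr (mul_nonpos_of_nonpos_of_nonneg hc hy)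

lemma integ_y_exp (μ : Measure ℝ) [IsProbabilityMeasure μ]
    (h0 : μ (Set.Iio (0:ℝ)) = 0) (hmom : Integrable (fun y : ℝ => y) μ)
    (c : ℝ) (hc : c ≤ 0) :
    Integrable (fun y => y * Real.exp (c * y)) μ := by
  have hae : ∀ᵐ y ∂μ, 0 ≤ y := by
    rw [ae_iff]
    convert h0 using 2
    ext y; simp [not_le, Set.mem_Iio]
  refine Integrable.mono' hmom.abs
    ((measurable_id.mul (measurable_const.mul measurable_id).exp).aestronglyMeasurable) ?_
  filter_upwards [hae] with y hy
  rw [Real.norm_eq_abs, abs_mul, abs_of_pos (Real.exp_pos _)]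
  calc |y| * Real.exp (c * y) ≤ |y| * 1 := by
        exact mul_le_mul_of_nonneg_left
          (Real.exp_le_one_iff.mpr (mul_nonpos_of_nonpos_of_nonneg hc hy)) (abs_nonneg y)
    _ = |y| := mul_one _

lemma integ2_exp (μ : Measure (ℝ × ℝ)) [IsProbabilityMeasure μ]
    (h0 : μ {p : ℝ × ℝ | ¬ (0 ≤ p.1 ∧ 0 ≤ p.2)} = 0) (a b : ℝ) (ha : a ≤ 0) (hb : b ≤ 0) :
    Integrable (fun p : ℝ × ℝ => Real.exp (a * p.1 + b * p.2)) μ := by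
  have hae : ∀ᵐ p ∂μ, 0 ≤ p.1 ∧ 0 ≤ p.2 := by rw [ae_iff]; exact h0
  refine Integrable.mono' (integrable_const 1)
    (((measurable_const.mul measurable_fst).add (measurable_const.mul measurable_snd)).exp.aestronglyMeasurable) ?_
  filter_upwards [hae] with p hp
  rw [Real.norm_eq_abs, abs_of_pos (Real.exp_pos _)]
  exact Real.exp_le_one_iff.mpr
    (add_nonpos (mul_nonpos_of_nonpos_of_nonneg ha hp.1) (mul_nonpos_of_nonpos_of_nonneg hb hp.2))

lemma integ2_fst (μ : Measure (ℝ × ℝ)) [IsProbabilityMeasure μ]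
    (h0 : μ {p : ℝ × ℝ | ¬ (0 ≤ p.1 ∧ 0 ≤ p.2)} = 0)
    (hmom : Integrable (fun p : ℝ × ℝ => p.1) μ)
    (a b : ℝ) (ha : a ≤ 0) (hb : b ≤ 0) :
    Integrable (fun p : ℝ × ℝ => p.1 * Real.exp (a * p.1 + b * p.2)) μ := by
  have hae : ∀ᵐ p ∂μ, 0 ≤ p.1 ∧ 0 ≤ p.2 := by rw [ae_iff]; exact h0
  refine Integrable.mono' hmom.abs
    ((measurable_fst.mul ((measurable_const.mul measurable_fst).add
      (measurable_const.mul measurable_snd)).exp).aestronglyMeasurable) ?_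
  filter_upwards [hae] with p hp
  rw [Real.norm_eq_abs, abs_mul, abs_of_pos (Real.exp_pos _)]
  calc |p.1| * Real.exp (a * p.1 + b * p.2) ≤ |p.1| * 1 :=
        mul_le_mul_of_nonneg_left (Real.exp_le_one_iff.mpr
          (add_nonpos (mul_nonpos_of_nonpos_of_nonneg ha hp.1)
            (mul_nonpos_of_nonpos_of_nonneg hb hp.2))) (abs_nonneg _)
    _ = |p.1| := mul_one _

lemma integ2_snd (μ : Measure (ℝ × ℝ)) [IsProbabilityMeasure μ]
    (h0 : μ {p : ℝ × ℝ | ¬ (0 ≤ p.1 ∧ 0 ≤ p.2)} = 0)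
    (hmom : Integrable (fun p : ℝ × ℝ => p.2) μ)
    (a b : ℝ) (ha : a ≤ 0) (hb : b ≤ 0) :
    Integrable (fun p : ℝ × ℝ => p.2 * Real.exp (a * p.1 + b * p.2)) μ := by
  have hae : ∀ᵐ p ∂μ, 0 ≤ p.1 ∧ 0 ≤ p.2 := by rw [ae_iff]; exact h0
  refine Integrable.mono' hmom.abs
    ((measurable_snd.mul ((measurable_const.mul measurable_fst).add
      (measurable_const.mul measurable_snd)).exp).aestronglyMeasurable) ?_
  filter_upwards [hae] with p hp
  rw [Real.norm_eq_abs, abs_mul, abs_of_pos (Real.exp_pos _)]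
  calc |p.2| * Real.exp (a * p.1 + b * p.2) ≤ |p.2| * 1 :=
        mul_le_mul_of_nonneg_left (Real.exp_le_one_iff.mpr
          (add_nonpos (mul_nonpos_of_nonpos_of_nonneg ha hp.1)
            (mul_nonpos_of_nonpos_of_nonneg hb hp.2))) (abs_nonneg _)
    _ = |p.2| := mul_one _

/-- Verification that the exponential-affine ansatz
`f(t,x_A,x_B) = (θ_{AB}(T−t) + θ_A(T−t)x_A + θ_B(T−t)x_B)
  · exp(β_{AB}(T−t) + β_A(T−t)x_A + β_B(T−t)x_B)`
solves the PIDE `(∂/∂t + ℒ)f = ℓf` of the two-counterparty jump-CIR model,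
provided the coefficient functions solve the associated (generalized) Riccati
and linear ODE systems on `[0,T]`. -/
theorem affine_ansatz_solves_PIDE
    (T aℓ bℓ cℓ αA αB κA κB σA σB cA cB dA dB lA lB lc lam : ℝ)
    (hT : 0 < T)
    (hcA : 0 ≤ cA) (hcB : 0 ≤ cB) (hdA : 0 ≤ dA) (hdB : 0 ≤ dB)
    (hlA : 0 ≤ lA) (hlB : 0 ≤ lB) (hlc : 0 ≤ lc)
    (hlam : lam = lA + lB + lc)
    (FA FB : Measure ℝ) (FAB : Measure (ℝ × ℝ))
    [IsProbabilityMeasure FA] [IsProbabilityMeasure FB] [IsProbabilityMeasure FAB]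
    (hFA : FA (Set.Iio (0:ℝ)) = 0) (hFB : FB (Set.Iio (0:ℝ)) = 0)
    (hFAB : FAB {p : ℝ × ℝ | ¬ (0 ≤ p.1 ∧ 0 ≤ p.2)} = 0)
    (hFAmom : Integrable (fun y : ℝ => y) FA)
    (hFBmom : Integrable (fun y : ℝ => y) FB)
    (hFABmom1 : Integrable (fun p : ℝ × ℝ => p.1) FAB)
    (hFABmom2 : Integrable (fun p : ℝ × ℝ => p.2) FAB)
    (Φ Φ₁ Φ₂ : ℝ → ℝ → ℝ) (ΦA ΦB ΦA' ΦB' : ℝ → ℝ)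
    (hΦ : ∀ a b : ℝ, Φ a b = ∫ p : ℝ × ℝ, Real.exp (a * p.1 + b * p.2) ∂FAB)
    (hΦ₁ : ∀ a b : ℝ, Φ₁ a b = ∫ p : ℝ × ℝ, p.1 * Real.exp (a * p.1 + b * p.2) ∂FAB)
    (hΦ₂ : ∀ a b : ℝ, Φ₂ a b = ∫ p : ℝ × ℝ, p.2 * Real.exp (a * p.1 + b * p.2) ∂FAB)
    (hΦA : ∀ a : ℝ, ΦA a = ∫ y : ℝ, Real.exp (a * y) ∂FA)
    (hΦB : ∀ a : ℝ, ΦB a = ∫ y : ℝ, Real.exp (a * y) ∂FB)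
    (hΦA' : ∀ a : ℝ, ΦA' a = ∫ y : ℝ, y * Real.exp (a * y) ∂FA)
    (hΦB' : ∀ a : ℝ, ΦB' a = ∫ y : ℝ, y * Real.exp (a * y) ∂FB)
    (βA βB βAB θA θB θAB : ℝ → ℝ)
    (hβAneg : ∀ u ∈ Icc (0:ℝ) T, βA u ≤ 0)
    (hβBneg : ∀ u ∈ Icc (0:ℝ) T, βB u ≤ 0)
    (hβA : ∀ u ∈ Icc (0:ℝ) T, HasDerivWithinAt βA
      (-κA * βA u + σA ^ 2 / 2 * (βA u) ^ 2 - aℓ) (Icc (0:ℝ) T) u)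
    (hβB : ∀ u ∈ Icc (0:ℝ) T, HasDerivWithinAt βB
      (-κB * βB u + σB ^ 2 / 2 * (βB u) ^ 2 - bℓ) (Icc (0:ℝ) T) u)
    (hβAB : ∀ u ∈ Icc (0:ℝ) T, HasDerivWithinAt βAB
      (αA * βA u + αB * βB u - lam - cℓ + lc * Φ (cA * βA u) (cB * βB u)
        + lA * ΦA (dA * βA u) + lB * ΦB (dB * βB u)) (Icc (0:ℝ) T) u)
    (hθA : ∀ u ∈ Icc (0:ℝ) T, HasDerivWithinAt θA
      (-κA * θA u + σA ^ 2 * θA u * βA u) (Icc (0:ℝ) T) u)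
    (hθB : ∀ u ∈ Icc (0:ℝ) T, HasDerivWithinAt θB
      (-κB * θB u + σB ^ 2 * θB u * βB u) (Icc (0:ℝ) T) u)
    (hθAB : ∀ u ∈ Icc (0:ℝ) T, HasDerivWithinAt θAB
      (αA * θA u + αB * θB u
        + lc * cA * θA u * Φ₁ (cA * βA u) (cB * βB u)
        + lc * cB * θB u * Φ₂ (cA * βA u) (cB * βB u)
        + lA * dA * θA u * ΦA' (dA * βA u)
        + lB * dB * θB u * ΦB' (dB * βB u)) (Icc (0:ℝ) T) u)
    (f : ℝ → ℝ → ℝ → ℝ)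
    (hf : ∀ t xA xB : ℝ, f t xA xB =
      (θAB (T - t) + θA (T - t) * xA + θB (T - t) * xB) *
        Real.exp (βAB (T - t) + βA (T - t) * xA + βB (T - t) * xB)) :
    ∀ t ∈ Icc (0:ℝ) T, ∀ xA xB : ℝ, 0 ≤ xA → 0 ≤ xB →
      derivWithin (fun t' => f t' xA xB) (Icc (0:ℝ) T) t
        + σA ^ 2 * xA / 2 * deriv (fun x => deriv (fun x' => f t x' xB) x) xA
        + σB ^ 2 * xB / 2 * deriv (fun x => deriv (fun x' => f t xA x') x) xB
        + (αA - κA * xA) * deriv (fun x => f t x xB) xA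
        + (αB - κB * xB) * deriv (fun x => f t xA x) xB
        - lam * f t xA xB
        + lA * (∫ y : ℝ, f t (xA + dA * y) xB ∂FA)
        + lB * (∫ y : ℝ, f t xA (xB + dB * y) ∂FB)
        + lc * (∫ p : ℝ × ℝ, f t (xA + cA * p.1) (xB + cB * p.2) ∂FAB)
      = (aℓ * xA + bℓ * xB + cℓ) * f t xA xB := by
  intro t ht xA xB hxA hxB
  subst hlam
  simp only [hf]
  set u := T - t with hu'
  have hu : u ∈ Icc (0:ℝ) T := by
    constructor
    · rw [hu']; linarith [ht.2]
    · rw [hu']; linarith [ht.1]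
  have hbA : βA u ≤ 0 := hβAneg _ hu
  have hbB : βB u ≤ 0 := hβBneg _ hu
  have hdAc : dA * βA u ≤ 0 := mul_nonpos_iff.mpr (Or.inl ⟨hdA, hbA⟩)
  have hdBc : dB * βB u ≤ 0 := mul_nonpos_iff.mpr (Or.inl ⟨hdB, hbB⟩)
  have hcAc : cA * βA u ≤ 0 := mul_nonpos_iff.mpr (Or.inl ⟨hcA, hbA⟩)
  have hcBc : cB * βB u ≤ 0 := mul_nonpos_iff.mpr (Or.inl ⟨hcB, hbB⟩)
  -- time derivative
  have hneg : HasDerivWithinAt (fun t' : ℝ => T - t') (-1 : ℝ) (Icc (0:ℝ) T) t :=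
    (hasDerivWithinAt_id t (Icc (0:ℝ) T)).const_sub T
  have hmaps : Set.MapsTo (fun t' : ℝ => T - t') (Icc (0:ℝ) T) (Icc (0:ℝ) T) := by
    intro s hs
    rw [Set.mem_Icc] at hs
    show T - s ∈ Icc (0:ℝ) T
    rw [Set.mem_Icc]
    constructor <;> linarith
  have hg := (((hθAB u hu).add ((hθA u hu).mul_const xA)).add
      ((hθB u hu).mul_const xB)).mul
    ((((hβAB u hu).add ((hβA u hu).mul_const xA)).add
      ((hβB u hu).mul_const xB)).exp)
  simp only [Pi.add_apply, Pi.mul_apply] at hg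
  have hcomp : HasDerivWithinAt
      (fun t' => (θAB (T - t') + θA (T - t') * xA + θB (T - t') * xB) *
        Real.exp (βAB (T - t') + βA (T - t') * xA + βB (T - t') * xB))
      _ (Icc (0:ℝ) T) t := (hg.comp t hneg hmaps :)
  rw [hcomp.derivWithin ((uniqueDiffOn_Icc hT) t ht)]
  -- xA derivatives
  have e1 : (fun x => (θAB u + θA u * x + θB u * xB) *
      Real.exp (βAB u + βA u * x + βB u * xB))
      = fun x => ((θAB u + θB u * xB) + θA u * x) *
        Real.exp ((βAB u + βB u * xB) + βA u * x) := by
    funext x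
    rw [show θAB u + θA u * x + θB u * xB = (θAB u + θB u * xB) + θA u * x by ring,
      show βAB u + βA u * x + βB u * xB = (βAB u + βB u * xB) + βA u * x by ring]
  rw [e1, dAE (θAB u + θB u * xB) (θA u) (βAB u + βB u * xB) (βA u) xA,
    d2AE (θAB u + θB u * xB) (θA u) (βAB u + βB u * xB) (βA u) xA,
    dAE (θAB u + θA u * xA) (θB u) (βAB u + βA u * xA) (βB u) xB,
    d2AE (θAB u + θA u * xA) (θB u) (βAB u + βA u * xA) (βB u) xB]
  -- integrals
  have hiA : (∫ y : ℝ, (θAB u + θA u * (xA + dA * y) + θB u * xB) *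
      Real.exp (βAB u + βA u * (xA + dA * y) + βB u * xB) ∂FA)
      = (Real.exp (βAB u + βA u * xA + βB u * xB) * (θAB u + θA u * xA + θB u * xB))
          * ΦA (dA * βA u)
        + (Real.exp (βAB u + βA u * xA + βB u * xB) * (θA u * dA)) * ΦA' (dA * βA u) := by
    have hrw : (fun y : ℝ => (θAB u + θA u * (xA + dA * y) + θB u * xB) *
        Real.exp (βAB u + βA u * (xA + dA * y) + βB u * xB))
        = fun y => (Real.exp (βAB u + βA u * xA + βB u * xB) *
            (θAB u + θA u * xA + θB u * xB)) * Real.exp ((dA * βA u) * y)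
          + (Real.exp (βAB u + βA u * xA + βB u * xB) * (θA u * dA)) *
            (y * Real.exp ((dA * βA u) * y)) := by
      funext y
      rw [show βAB u + βA u * (xA + dA * y) + βB u * xB
          = (βAB u + βA u * xA + βB u * xB) + (dA * βA u) * y by ring, Real.exp_add]
      ring
    rw [hrw, integral_add ((integ_exp FA hFA _ hdAc).const_mul _)
        ((integ_y_exp FA hFA hFAmom _ hdAc).const_mul _),
      integral_const_mul, integral_const_mul, ← hΦA, ← hΦA']
  have hiB : (∫ y : ℝ, (θAB u + θA u * xA + θB u * (xB + dB * y)) *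
      Real.exp (βAB u + βA u * xA + βB u * (xB + dB * y)) ∂FB)
      = (Real.exp (βAB u + βA u * xA + βB u * xB) * (θAB u + θA u * xA + θB u * xB))
          * ΦB (dB * βB u)
        + (Real.exp (βAB u + βA u * xA + βB u * xB) * (θB u * dB)) * ΦB' (dB * βB u) := by
    have hrw : (fun y : ℝ => (θAB u + θA u * xA + θB u * (xB + dB * y)) *
        Real.exp (βAB u + βA u * xA + βB u * (xB + dB * y)))
        = fun y => (Real.exp (βAB u + βA u * xA + βB u * xB) *
            (θAB u + θA u * xA + θB u * xB)) * Real.exp ((dB * βB u) * y)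
          + (Real.exp (βAB u + βA u * xA + βB u * xB) * (θB u * dB)) *
            (y * Real.exp ((dB * βB u) * y)) := by
      funext y
      rw [show βAB u + βA u * xA + βB u * (xB + dB * y)
          = (βAB u + βA u * xA + βB u * xB) + (dB * βB u) * y by ring, Real.exp_add]
      ring
    rw [hrw, integral_add ((integ_exp FB hFB _ hdBc).const_mul _)
        ((integ_y_exp FB hFB hFBmom _ hdBc).const_mul _),
      integral_const_mul, integral_const_mul, ← hΦB, ← hΦB']
  have hiAB : (∫ p : ℝ × ℝ, (θAB u + θA u * (xA + cA * p.1) + θB u * (xB + cB * p.2)) *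
      Real.exp (βAB u + βA u * (xA + cA * p.1) + βB u * (xB + cB * p.2)) ∂FAB)
      = (Real.exp (βAB u + βA u * xA + βB u * xB) * (θAB u + θA u * xA + θB u * xB))
          * Φ (cA * βA u) (cB * βB u)
        + ((Real.exp (βAB u + βA u * xA + βB u * xB) * (θA u * cA)) *
            Φ₁ (cA * βA u) (cB * βB u)
          + (Real.exp (βAB u + βA u * xA + βB u * xB) * (θB u * cB)) *
            Φ₂ (cA * βA u) (cB * βB u)) := by
    have hrw : (fun p : ℝ × ℝ => (θAB u + θA u * (xA + cA * p.1) + θB u * (xB + cB * p.2)) *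
        Real.exp (βAB u + βA u * (xA + cA * p.1) + βB u * (xB + cB * p.2)))
        = fun p => (Real.exp (βAB u + βA u * xA + βB u * xB) *
            (θAB u + θA u * xA + θB u * xB)) *
              Real.exp ((cA * βA u) * p.1 + (cB * βB u) * p.2)
          + ((Real.exp (βAB u + βA u * xA + βB u * xB) * (θA u * cA)) *
              (p.1 * Real.exp ((cA * βA u) * p.1 + (cB * βB u) * p.2))
            + (Real.exp (βAB u + βA u * xA + βB u * xB) * (θB u * cB)) *
              (p.2 * Real.exp ((cA * βA u) * p.1 + (cB * βB u) * p.2))) := by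
      funext p
      rw [show βAB u + βA u * (xA + cA * p.1) + βB u * (xB + cB * p.2)
          = (βAB u + βA u * xA + βB u * xB)
            + ((cA * βA u) * p.1 + (cB * βB u) * p.2) by ring, Real.exp_add]
      ring
    have h2 : Integrable (fun p : ℝ × ℝ =>
        (Real.exp (βAB u + βA u * xA + βB u * xB) * (θA u * cA)) *
          (p.1 * Real.exp ((cA * βA u) * p.1 + (cB * βB u) * p.2))) FAB :=
      (integ2_fst FAB hFAB hFABmom1 _ _ hcAc hcBc).const_mul _
    have h3 : Integrable (fun p : ℝ × ℝ =>
        (Real.exp (βAB u + βA u * xA + βB u * xB) * (θB u * cB)) *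
          (p.2 * Real.exp ((cA * βA u) * p.1 + (cB * βB u) * p.2))) FAB :=
      (integ2_snd FAB hFAB hFABmom2 _ _ hcAc hcBc).const_mul _
    have h23 : Integrable (fun p : ℝ × ℝ =>
        (Real.exp (βAB u + βA u * xA + βB u * xB) * (θA u * cA)) *
          (p.1 * Real.exp ((cA * βA u) * p.1 + (cB * βB u) * p.2))
        + (Real.exp (βAB u + βA u * xA + βB u * xB) * (θB u * cB)) *
          (p.2 * Real.exp ((cA * βA u) * p.1 + (cB * βB u) * p.2))) FAB := h2.add h3
    rw [hrw, integral_add ((integ2_exp FAB hFAB _ _ hcAc hcBc).const_mul _) h23,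
      integral_add h2 h3,
      integral_const_mul, integral_const_mul, integral_const_mul, ← hΦ, ← hΦ₁, ← hΦ₂]
  rw [hiA, hiB, hiAB,
    show (βAB u + βB u * xB) + βA u * xA = βAB u + βA u * xA + βB u * xB by ring,
    show (βAB u + βA u * xA) + βB u * xB = βAB u + βA u * xA + βB u * xB by ring]
  ring
end

section
/- Let T > 0, a_ℓ > 0, b_ℓ > 0, c_ℓ, d_g ∈ ℝ, e_g < 0, f_g < 0, let κ_A, κ_B, σ_A, σ_B > 0, α_A, α_B ≥ 0, c_A, c_B, d_A, d_B ≥ 0, λ̂_A, λ̂_B, λ̂_c ≥ 0 and set λ = λ̂_A + λ̂_B + λ̂_c. Let F̃_A, F̃_B be probability measures on [0,∞) and F_{AB} a probability measure on [0,∞)², and define Φ(θ_A,θ_B) = ∫ e^{θ_A y_A + θ_B y_B} F_{AB}(dy), Φ̃_A(θ) = ∫ e^{θy} F̃_A(dy), Φ̃_B(θ) = ∫ e^{θy} F̃_B(dy). Define β_A(u) = a_ℓ · β(κ_A, σ_A√a_ℓ, e_g/a_ℓ; u), β_B(u) = b_ℓ · β(κ_B, σ_B√b_ℓ, f_g/b_ℓ;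 u), and β_{AB}(u) = d_g − (λ + c_ℓ)u + ∫₀^u [ α_A β_A(v) + α_B β_B(v) + λ̂_c Φ(c_Aβ_A(v), c_Bβ_B(v)) + λ̂_A Φ̃_A(d_Aβ_A(v)) + λ̂_B Φ̃_B(d_Bβ_B(v)) ] dv. Then β_A(u) ≤ 0 and β_B(u) ≤ 0 for all u ∈ [0,T] (so all the exponential moments above are finite), and on [0,T] the triple satisfies: β_A′ = −κ_A β_A + (σ_A²/2) β_A² − a_ℓ with β_A(0) = e_g; β_B′ = −κ_B β_B + (σ_B²/2) β_B² − b_ℓ with β_B(0) = f_g; and β_{AB}′(u) = α_A β_A(u) + α_B β_B(u) − λ − c_ℓ + λ̂_c Φ(c_Aβ_A(u), c_Bβ_B(u)) + λ̂_A Φ̃_A(d_Aβ_A(u)) + λ̂_B Φ̃_B(d_Bβ_B(u)) with β_{AB}(0) = d_g. -/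
open MeasureTheory Real Set

/-- `B(κ,σ;u) = −2(e^{ϖu} − 1)/(2ϖ + (κ+ϖ)(e^{ϖu} − 1))` with `ϖ = √(κ² + 2σ²)`. -/
noncomputable def Bfun (κ σ u : ℝ) : ℝ :=
  -(2 * (Real.exp (Real.sqrt (κ ^ 2 + 2 * σ ^ 2) * u) - 1)) /
    (2 * Real.sqrt (κ ^ 2 + 2 * σ ^ 2) +
      (κ + Real.sqrt (κ ^ 2 + 2 * σ ^ 2)) *
        (Real.exp (Real.sqrt (κ ^ 2 + 2 * σ ^ 2) * u) - 1))

/-- `φ(u) = σ²∫₀ᵘ B(κ,σ;v)dv − κu`. -/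
noncomputable def phiFun (κ σ u : ℝ) : ℝ :=
  σ ^ 2 * (∫ v in (0:ℝ)..u, Bfun κ σ v) - κ * u

/-- `β(κ,σ,b;u) = B(κ,σ;u) + e^{φ(u)}·(1/b − (σ²/2)∫₀ᵘ e^{φ(v)}dv)⁻¹`. -/
noncomputable def betaFun (κ σ b u : ℝ) : ℝ :=
  Bfun κ σ u + Real.exp (phiFun κ σ u) *
    (1 / b - σ ^ 2 / 2 * ∫ v in (0:ℝ)..u, Real.exp (phiFun κ σ v))⁻¹

section AuxLemmas

lemma pw_pos {κ σ : ℝ} (hσ : 0 < σ) : 0 < Real.sqrt (κ ^ 2 + 2 * σ ^ 2) :=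
  Real.sqrt_pos.2 (by positivity)

lemma denom_pos {κ σ : ℝ} (hκ : 0 < κ) (hσ : 0 < σ) {u : ℝ} (hu : 0 ≤ u) :
    0 < 2 * Real.sqrt (κ ^ 2 + 2 * σ ^ 2) +
      (κ + Real.sqrt (κ ^ 2 + 2 * σ ^ 2)) *
        (Real.exp (Real.sqrt (κ ^ 2 + 2 * σ ^ 2) * u) - 1) := by
  have h1 := pw_pos (κ := κ) hσ
  have h2 : (1:ℝ) ≤ Real.exp (Real.sqrt (κ ^ 2 + 2 * σ ^ 2) * u) :=
    Real.one_le_exp (by positivity)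
  nlinarith

lemma Bfun_nonpos {κ σ : ℝ} (hκ : 0 < κ) (hσ : 0 < σ) {u : ℝ} (hu : 0 ≤ u) :
    Bfun κ σ u ≤ 0 := by
  have h2 : (1:ℝ) ≤ Real.exp (Real.sqrt (κ ^ 2 + 2 * σ ^ 2) * u) :=
    Real.one_le_exp (by positivity)
  exact div_nonpos_of_nonpos_of_nonneg (by linarith) (denom_pos hκ hσ hu).le

lemma Bfun_hasDerivAt {κ σ : ℝ} (hκ : 0 < κ) (hσ : 0 < σ) {u : ℝ} (hu : 0 ≤ u) :
    HasDerivAt (Bfun κ σ)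
      (-κ * Bfun κ σ u + σ ^ 2 / 2 * (Bfun κ σ u) ^ 2 - 1) u := by
  have hDpos := denom_pos hκ hσ hu
  simp only [Bfun] at hDpos ⊢
  set w := Real.sqrt (κ ^ 2 + 2 * σ ^ 2) with hw
  have hw2 : w ^ 2 = κ ^ 2 + 2 * σ ^ 2 := Real.sq_sqrt (by positivity)
  have hσ2 : σ ^ 2 = (w ^ 2 - κ ^ 2) / 2 := by linarith
  have hE : HasDerivAt (fun u : ℝ => Real.exp (w * u)) (Real.exp (w * u) * w) u := by
    simpa using (HasDerivAt.exp (by simpa using (hasDerivAt_id u).const_mul w))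
  have hnum : HasDerivAt (fun u : ℝ => -(2 * (Real.exp (w * u) - 1)))
      (-(2 * (Real.exp (w * u) * w))) u := ((hE.sub_const 1).const_mul 2).neg
  have hden : HasDerivAt (fun u : ℝ => 2 * w + (κ + w) * (Real.exp (w * u) - 1))
      ((κ + w) * (Real.exp (w * u) * w)) u :=
    ((hE.sub_const 1).const_mul (κ + w)).const_add (2 * w)
  have hdiv := hnum.div hden hDpos.ne'
  refine hdiv.congr_deriv ?_
  rw [hσ2]
  field_simp
  ring

/-- FTC: derivative within `Icc 0 T` of an indefinite integral of a continuous function. -/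
lemma ftc_icc {T : ℝ} {f : ℝ → ℝ} (hf : ContinuousOn f (Icc 0 T)) {u : ℝ}
    (hu : u ∈ Icc (0:ℝ) T) :
    HasDerivWithinAt (fun x => ∫ v in (0:ℝ)..x, f v) (f u) (Icc (0:ℝ) T) u := by
  haveI : Fact (u ∈ Icc (0:ℝ) T) := ⟨hu⟩
  have hint : IntervalIntegrable f volume 0 u :=
    (hf.mono (by rw [uIcc_of_le hu.1]; exact Icc_subset_Icc le_rfl hu.2)).intervalIntegrable
  exact intervalIntegral.integral_hasDerivWithinAt_right hint
    (hf.stronglyMeasurableAtFilter_nhdsWithin measurableSet_Icc u) (hf u hu)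

variable {κ σ b T : ℝ}

lemma Bfun_contOn (hκ : 0 < κ) (hσ : 0 < σ) : ContinuousOn (Bfun κ σ) (Icc 0 T) :=
  fun u hu => (Bfun_hasDerivAt hκ hσ hu.1).continuousAt.continuousWithinAt

lemma phi_hasDeriv (hκ : 0 < κ) (hσ : 0 < σ) {u : ℝ} (hu : u ∈ Icc (0:ℝ) T) :
    HasDerivWithinAt (phiFun κ σ) (σ ^ 2 * Bfun κ σ u - κ) (Icc (0:ℝ) T) u := by
  have h1 := (ftc_icc (Bfun_contOn hκ hσ) hu).const_mul (σ ^ 2)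
  have h2 : HasDerivWithinAt (fun u : ℝ => κ * u) κ (Icc (0:ℝ) T) u := by
    simpa using ((hasDerivAt_id u).const_mul κ).hasDerivWithinAt
  exact h1.sub h2

lemma phi_contOn (hκ : 0 < κ) (hσ : 0 < σ) :
    ContinuousOn (phiFun κ σ) (Icc (0:ℝ) T) :=
  fun u hu => (phi_hasDeriv hκ hσ hu).continuousWithinAt

lemma expphi_contOn (hκ : 0 < κ) (hσ : 0 < σ) :
    ContinuousOn (fun v => Real.exp (phiFun κ σ v)) (Icc (0:ℝ) T) :=
  Real.continuous_exp.comp_continuousOn (phi_contOn hκ hσ)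

lemma g_neg (hb : b < 0) {u : ℝ} (hu : u ∈ Icc (0:ℝ) T) :
    1 / b - σ ^ 2 / 2 * (∫ v in (0:ℝ)..u, Real.exp (phiFun κ σ v)) < 0 := by
  have h1 : 1 / b < 0 := one_div_neg.2 hb
  have h2 : 0 ≤ ∫ v in (0:ℝ)..u, Real.exp (phiFun κ σ v) :=
    intervalIntegral.integral_nonneg hu.1 (fun x _ => (Real.exp_pos _).le)
  nlinarith [sq_nonneg σ]

lemma betaFun_nonpos (hκ : 0 < κ) (hσ : 0 < σ) (hb : b < 0) {u : ℝ}
    (hu : u ∈ Icc (0:ℝ) T) : betaFun κ σ b u ≤ 0 := by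
  have h1 := Bfun_nonpos hκ hσ hu.1
  have h2 := g_neg (κ := κ) (σ := σ) hb hu
  have h3 : Real.exp (phiFun κ σ u) *
      (1 / b - σ ^ 2 / 2 * ∫ v in (0:ℝ)..u, Real.exp (phiFun κ σ v))⁻¹ ≤ 0 :=
    mul_nonpos_iff.2 (Or.inl ⟨(Real.exp_pos _).le, (inv_neg''.2 h2).le⟩)
  have := add_nonpos h1 h3
  simpa [betaFun] using this

lemma betaFun_zero : betaFun κ σ b 0 = b := by
  have hB : Bfun κ σ 0 = 0 := by simp [Bfun]
  simp [betaFun, hB, phiFun]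

lemma betaFun_hasDeriv (hκ : 0 < κ) (hσ : 0 < σ) (hb : b < 0) {u : ℝ}
    (hu : u ∈ Icc (0:ℝ) T) :
    HasDerivWithinAt (betaFun κ σ b)
      (-κ * betaFun κ σ b u + σ ^ 2 / 2 * (betaFun κ σ b u) ^ 2 - 1)
      (Icc (0:ℝ) T) u := by
  have hB := (Bfun_hasDerivAt hκ hσ hu.1).hasDerivWithinAt (s := Icc (0:ℝ) T)
  have hφ := phi_hasDeriv (T := T) hκ hσ hu
  have hexp := hφ.exp
  have hG : HasDerivWithinAt
      (fun u => 1 / b - σ ^ 2 / 2 * ∫ v in (0:ℝ)..u, Real.exp (phiFun κ σ v))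
      (-(σ ^ 2 / 2 * Real.exp (phiFun κ σ u))) (Icc (0:ℝ) T) u :=
    ((ftc_icc (expphi_contOn hκ hσ) hu).const_mul (σ ^ 2 / 2)).const_sub (1 / b)
  have hGne := (g_neg (κ := κ) (σ := σ) hb hu).ne
  have hInv := hG.inv hGne
  have hmain := hB.add (hexp.mul hInv)
  refine hmain.congr_deriv ?_
  simp only [betaFun, Pi.inv_apply]
  set x := Bfun κ σ u
  set p := Real.exp (phiFun κ σ u)
  set G := 1 / b - σ ^ 2 / 2 * ∫ v in (0:ℝ)..u, Real.exp (phiFun κ σ v)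
  have hGne' : G ≠ 0 := hGne
  field_simp
  ring

lemma integrable_exp_of_nonpos {μ : Measure ℝ} [IsProbabilityMeasure μ]
    (hae : ∀ᵐ y ∂μ, 0 ≤ y) {θ : ℝ} (hθ : θ ≤ 0) :
    Integrable (fun y => Real.exp (θ * y)) μ := by
  refine (integrable_const (1:ℝ)).mono' ?_ ?_
  · exact (Real.continuous_exp.comp (continuous_const.mul continuous_id)).aestronglyMeasurable
  · filter_upwards [hae] with y hy
    rw [Real.norm_eq_abs, Real.abs_exp]
    exact Real.exp_le_one_iff.2 (mul_nonpos_iff.2 (Or.inr ⟨hθ, hy⟩))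

lemma integrable_exp2_of_nonpos {μ : Measure (ℝ × ℝ)} [IsProbabilityMeasure μ]
    (hae : ∀ᵐ p ∂μ, 0 ≤ p.1 ∧ 0 ≤ p.2) {θ1 θ2 : ℝ} (h1 : θ1 ≤ 0) (h2 : θ2 ≤ 0) :
    Integrable (fun p : ℝ × ℝ => Real.exp (θ1 * p.1 + θ2 * p.2)) μ := by
  refine (integrable_const (1:ℝ)).mono' ?_ ?_
  · exact (Real.continuous_exp.comp ((continuous_const.mul continuous_fst).add
      (continuous_const.mul continuous_snd))).aestronglyMeasurable
  · filter_upwards [hae] with p hp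
    rw [Real.norm_eq_abs, Real.abs_exp]
    refine Real.exp_le_one_iff.2 (add_nonpos ?_ ?_)
    · exact mul_nonpos_iff.2 (Or.inr ⟨h1, hp.1⟩)
    · exact mul_nonpos_iff.2 (Or.inr ⟨h2, hp.2⟩)

end AuxLemmas

/-- Explicit solution of the generalized Riccati system
`R(a_ℓ, b_ℓ, c_ℓ)` for the exponential coefficients `(β_A, β_B, β_{AB})` of the
exponential-affine transform of the two-counterparty jump-CIR model:
`β_A(u) = a_ℓ·β(κ_A, σ_A√a_ℓ, e_g/a_ℓ; u)`, `β_B(u) = b_ℓ·β(κ_B, σ_B√b_ℓ, f_g/b_ℓ; u)`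
and `β_{AB}` given by integration. Both `β_A, β_B` are nonpositive on `[0,T]`
(so all exponential moments are finite) and the triple solves the system with
the stated initial conditions. -/
theorem generalized_riccati_beta_solution
    (T aℓ bℓ cℓ dg eg fg κA κB σA σB αA αB cA cB dA dB lA lB lc lam : ℝ)
    (hT : 0 < T) (haℓ : 0 < aℓ) (hbℓ : 0 < bℓ)
    (heg : eg < 0) (hfg : fg < 0)
    (hκA : 0 < κA) (hκB : 0 < κB) (hσA : 0 < σA) (hσB : 0 < σB)
    (hαA : 0 ≤ αA) (hαB : 0 ≤ αB)
    (hcA : 0 ≤ cA) (hcB : 0 ≤ cB) (hdA : 0 ≤ dA) (hdB : 0 ≤ dB)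
    (hlA : 0 ≤ lA) (hlB : 0 ≤ lB) (hlc : 0 ≤ lc)
    (hlam : lam = lA + lB + lc)
    (FA FB : Measure ℝ) (FAB : Measure (ℝ × ℝ))
    [IsProbabilityMeasure FA] [IsProbabilityMeasure FB] [IsProbabilityMeasure FAB]
    (hFA : FA (Set.Iio (0:ℝ)) = 0) (hFB : FB (Set.Iio (0:ℝ)) = 0)
    (hFAB : FAB {p : ℝ × ℝ | ¬ (0 ≤ p.1 ∧ 0 ≤ p.2)} = 0)
    (Φ : ℝ → ℝ → ℝ) (ΦA ΦB : ℝ → ℝ)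
    (hΦ : ∀ a b : ℝ, Φ a b = ∫ p : ℝ × ℝ, Real.exp (a * p.1 + b * p.2) ∂FAB)
    (hΦA : ∀ a : ℝ, ΦA a = ∫ y : ℝ, Real.exp (a * y) ∂FA)
    (hΦB : ∀ a : ℝ, ΦB a = ∫ y : ℝ, Real.exp (a * y) ∂FB)
    (βA βB βAB : ℝ → ℝ)
    (hβA : ∀ u : ℝ, βA u = aℓ * betaFun κA (σA * Real.sqrt aℓ) (eg / aℓ) u)
    (hβB : ∀ u : ℝ, βB u = bℓ * betaFun κB (σB * Real.sqrt bℓ) (fg / bℓ) u)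
    (hβAB : ∀ u : ℝ, βAB u = dg - (lam + cℓ) * u +
      ∫ v in (0:ℝ)..u, (αA * βA v + αB * βB v + lc * Φ (cA * βA v) (cB * βB v)
        + lA * ΦA (dA * βA v) + lB * ΦB (dB * βB v))) :
    (∀ u ∈ Icc (0:ℝ) T, βA u ≤ 0 ∧ βB u ≤ 0) ∧
    (∀ u ∈ Icc (0:ℝ) T,
      Integrable (fun p : ℝ × ℝ => Real.exp (cA * βA u * p.1 + cB * βB u * p.2)) FAB ∧
      Integrable (fun y : ℝ => Real.exp (dA * βA u * y)) FA ∧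
      Integrable (fun y : ℝ => Real.exp (dB * βB u * y)) FB) ∧
    βA 0 = eg ∧ βB 0 = fg ∧ βAB 0 = dg ∧
    (∀ u ∈ Icc (0:ℝ) T, HasDerivWithinAt βA
      (-κA * βA u + σA ^ 2 / 2 * (βA u) ^ 2 - aℓ) (Icc (0:ℝ) T) u) ∧
    (∀ u ∈ Icc (0:ℝ) T, HasDerivWithinAt βB
      (-κB * βB u + σB ^ 2 / 2 * (βB u) ^ 2 - bℓ) (Icc (0:ℝ) T) u) ∧
    (∀ u ∈ Icc (0:ℝ) T, HasDerivWithinAt βAB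
      (αA * βA u + αB * βB u - lam - cℓ + lc * Φ (cA * βA u) (cB * βB u)
        + lA * ΦA (dA * βA u) + lB * ΦB (dB * βB u)) (Icc (0:ℝ) T) u) := by
  have hsA : 0 < σA * Real.sqrt aℓ := mul_pos hσA (Real.sqrt_pos.2 haℓ)
  have hsB : 0 < σB * Real.sqrt bℓ := mul_pos hσB (Real.sqrt_pos.2 hbℓ)
  have hbA : eg / aℓ < 0 := div_neg_of_neg_of_pos heg haℓ
  have hbB : fg / bℓ < 0 := div_neg_of_neg_of_pos hfg hbℓ
  have hβAfun : βA = fun u => aℓ * betaFun κA (σA * Real.sqrt aℓ) (eg / aℓ) u :=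
    funext hβA
  have hβBfun : βB = fun u => bℓ * betaFun κB (σB * Real.sqrt bℓ) (fg / bℓ) u :=
    funext hβB
  -- nonpositivity
  have hA0 : ∀ u ∈ Icc (0:ℝ) T, βA u ≤ 0 := fun u hu => by
    rw [hβA]
    exact mul_nonpos_iff.2 (Or.inl ⟨haℓ.le, betaFun_nonpos hκA hsA hbA hu⟩)
  have hB0 : ∀ u ∈ Icc (0:ℝ) T, βB u ≤ 0 := fun u hu => by
    rw [hβB]
    exact mul_nonpos_iff.2 (Or.inl ⟨hbℓ.le, betaFun_nonpos hκB hsB hbB hu⟩)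
  -- derivatives of βA, βB
  have hAderiv : ∀ u ∈ Icc (0:ℝ) T, HasDerivWithinAt βA
      (-κA * βA u + σA ^ 2 / 2 * (βA u) ^ 2 - aℓ) (Icc (0:ℝ) T) u := by
    intro u hu
    have h := (betaFun_hasDeriv hκA hsA hbA hu).const_mul aℓ
    have hval : -κA * βA u + σA ^ 2 / 2 * (βA u) ^ 2 - aℓ =
        aℓ * (-κA * betaFun κA (σA * Real.sqrt aℓ) (eg / aℓ) u +
          (σA * Real.sqrt aℓ) ^ 2 / 2 *
            (betaFun κA (σA * Real.sqrt aℓ) (eg / aℓ) u) ^ 2 - 1) := by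
      have hs2 : Real.sqrt aℓ ^ 2 = aℓ := Real.sq_sqrt haℓ.le
      rw [hβA u, mul_pow σA (Real.sqrt aℓ) 2, hs2]; ring
    rw [hval, hβAfun]
    exact h
  have hBderiv : ∀ u ∈ Icc (0:ℝ) T, HasDerivWithinAt βB
      (-κB * βB u + σB ^ 2 / 2 * (βB u) ^ 2 - bℓ) (Icc (0:ℝ) T) u := by
    intro u hu
    have h := (betaFun_hasDeriv hκB hsB hbB hu).const_mul bℓ
    have hval : -κB * βB u + σB ^ 2 / 2 * (βB u) ^ 2 - bℓ =
        bℓ * (-κB * betaFun κB (σB * Real.sqrt bℓ) (fg / bℓ) u +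
          (σB * Real.sqrt bℓ) ^ 2 / 2 *
            (betaFun κB (σB * Real.sqrt bℓ) (fg / bℓ) u) ^ 2 - 1) := by
      have hs2 : Real.sqrt bℓ ^ 2 = bℓ := Real.sq_sqrt hbℓ.le
      rw [hβB u, mul_pow σB (Real.sqrt bℓ) 2, hs2]; ring
    rw [hval, hβBfun]
    exact h
  -- continuity
  have hAcont : ContinuousOn βA (Icc (0:ℝ) T) :=
    fun u hu => (hAderiv u hu).continuousWithinAt
  have hBcont : ContinuousOn βB (Icc (0:ℝ) T) :=
    fun u hu => (hBderiv u hu).continuousWithinAt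
  -- a.e. nonnegativity of the jump measures
  have haeA : ∀ᵐ y ∂FA, 0 ≤ y := by
    rw [ae_iff]
    have hset : {y : ℝ | ¬ 0 ≤ y} = Iio 0 := by ext y; simp
    rw [hset]; exact hFA
  have haeB : ∀ᵐ y ∂FB, 0 ≤ y := by
    rw [ae_iff]
    have hset : {y : ℝ | ¬ 0 ≤ y} = Iio 0 := by ext y; simp
    rw [hset]; exact hFB
  have haeAB : ∀ᵐ p ∂FAB, 0 ≤ p.1 ∧ 0 ≤ p.2 := by
    rw [ae_iff]; exact hFAB
  -- integrability
  have hInt : ∀ u ∈ Icc (0:ℝ) T,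
      Integrable (fun p : ℝ × ℝ => Real.exp (cA * βA u * p.1 + cB * βB u * p.2)) FAB ∧
      Integrable (fun y : ℝ => Real.exp (dA * βA u * y)) FA ∧
      Integrable (fun y : ℝ => Real.exp (dB * βB u * y)) FB := by
    intro u hu
    refine ⟨integrable_exp2_of_nonpos haeAB ?_ ?_,
      integrable_exp_of_nonpos haeA ?_, integrable_exp_of_nonpos haeB ?_⟩
    · exact mul_nonpos_iff.2 (Or.inl ⟨hcA, hA0 u hu⟩)
    · exact mul_nonpos_iff.2 (Or.inl ⟨hcB, hB0 u hu⟩)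
    · exact mul_nonpos_iff.2 (Or.inl ⟨hdA, hA0 u hu⟩)
    · exact mul_nonpos_iff.2 (Or.inl ⟨hdB, hB0 u hu⟩)
  -- continuity of the moment generating terms
  have hΦcont : ContinuousOn (fun v => Φ (cA * βA v) (cB * βB v)) (Icc (0:ℝ) T) := by
    have hrw : (fun v => Φ (cA * βA v) (cB * βB v)) =
        fun v => ∫ p : ℝ × ℝ, Real.exp (cA * βA v * p.1 + cB * βB v * p.2) ∂FAB :=
      funext fun v => hΦ _ _
    rw [hrw]
    intro u hu
    apply continuousWithinAt_of_dominated (bound := fun _ => (1:ℝ))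
    · exact Filter.Eventually.of_forall fun v =>
        (Real.continuous_exp.comp ((continuous_const.mul continuous_fst).add
          (continuous_const.mul continuous_snd))).aestronglyMeasurable
    · filter_upwards [self_mem_nhdsWithin] with v hv
      filter_upwards [haeAB] with p hp
      rw [Real.norm_eq_abs, Real.abs_exp]
      refine Real.exp_le_one_iff.2 (add_nonpos ?_ ?_)
      · exact mul_nonpos_iff.2
          (Or.inr ⟨mul_nonpos_iff.2 (Or.inl ⟨hcA, hA0 v hv⟩), hp.1⟩)
      · exact mul_nonpos_iff.2
          (Or.inr ⟨mul_nonpos_iff.2 (Or.inl ⟨hcB, hB0 v hv⟩), hp.2⟩)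
    · exact integrable_const 1
    · refine Filter.Eventually.of_forall fun p => ?_
      exact Real.continuous_exp.continuousAt.comp_continuousWithinAt
        (((continuousWithinAt_const.mul (hAcont u hu)).mul continuousWithinAt_const).add
          (((continuousWithinAt_const.mul (hBcont u hu)).mul continuousWithinAt_const)))
  have hΦAcont : ContinuousOn (fun v => ΦA (dA * βA v)) (Icc (0:ℝ) T) := by
    have hrw : (fun v => ΦA (dA * βA v)) =
        fun v => ∫ y : ℝ, Real.exp (dA * βA v * y) ∂FA := funext fun v => hΦA _
    rw [hrw]
    intro u hu
    apply continuousWithinAt_of_dominated (bound := fun _ => (1:ℝ))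
    · exact Filter.Eventually.of_forall fun v =>
        (Real.continuous_exp.comp (continuous_const.mul continuous_id)).aestronglyMeasurable
    · filter_upwards [self_mem_nhdsWithin] with v hv
      filter_upwards [haeA] with y hy
      rw [Real.norm_eq_abs, Real.abs_exp]
      exact Real.exp_le_one_iff.2 (mul_nonpos_iff.2
        (Or.inr ⟨mul_nonpos_iff.2 (Or.inl ⟨hdA, hA0 v hv⟩), hy⟩))
    · exact integrable_const 1
    · refine Filter.Eventually.of_forall fun y => ?_
      exact Real.continuous_exp.continuousAt.comp_continuousWithinAt
        ((continuousWithinAt_const.mul (hAcont u hu)).mul continuousWithinAt_const)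
  have hΦBcont : ContinuousOn (fun v => ΦB (dB * βB v)) (Icc (0:ℝ) T) := by
    have hrw : (fun v => ΦB (dB * βB v)) =
        fun v => ∫ y : ℝ, Real.exp (dB * βB v * y) ∂FB := funext fun v => hΦB _
    rw [hrw]
    intro u hu
    apply continuousWithinAt_of_dominated (bound := fun _ => (1:ℝ))
    · exact Filter.Eventually.of_forall fun v =>
        (Real.continuous_exp.comp (continuous_const.mul continuous_id)).aestronglyMeasurable
    · filter_upwards [self_mem_nhdsWithin] with v hv
      filter_upwards [haeB] with y hy
      rw [Real.norm_eq_abs, Real.abs_exp]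
      exact Real.exp_le_one_iff.2 (mul_nonpos_iff.2
        (Or.inr ⟨mul_nonpos_iff.2 (Or.inl ⟨hdB, hB0 v hv⟩), hy⟩))
    · exact integrable_const 1
    · refine Filter.Eventually.of_forall fun y => ?_
      exact Real.continuous_exp.continuousAt.comp_continuousWithinAt
        ((continuousWithinAt_const.mul (hBcont u hu)).mul continuousWithinAt_const)
  have hIcont : ContinuousOn (fun v => αA * βA v + αB * βB v +
      lc * Φ (cA * βA v) (cB * βB v) + lA * ΦA (dA * βA v) + lB * ΦB (dB * βB v))
      (Icc (0:ℝ) T) :=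
    ((((continuousOn_const.mul hAcont).add (continuousOn_const.mul hBcont)).add
      (continuousOn_const.mul hΦcont)).add (continuousOn_const.mul hΦAcont)).add
      (continuousOn_const.mul hΦBcont)
  refine ⟨fun u hu => ⟨hA0 u hu, hB0 u hu⟩, hInt, ?_, ?_, ?_, hAderiv, hBderiv, ?_⟩
  · rw [hβA, betaFun_zero]; field_simp
  · rw [hβB, betaFun_zero]; field_simp
  · rw [hβAB]; simp
  · intro u hu
    have h1 : HasDerivWithinAt (fun u : ℝ => dg - (lam + cℓ) * u) (-(lam + cℓ))
        (Icc (0:ℝ) T) u := by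
      simpa using (((hasDerivAt_id u).const_mul (lam + cℓ)).const_sub dg).hasDerivWithinAt
    have h := h1.add (ftc_icc hIcont hu)
    have hβABfun : βAB = fun u => dg - (lam + cℓ) * u +
        ∫ v in (0:ℝ)..u, (αA * βA v + αB * βB v + lc * Φ (cA * βA v) (cB * βB v)
          + lA * ΦA (dA * βA v) + lB * ΦB (dB * βB v)) := funext hβAB
    rw [hβABfun]
    refine h.congr_deriv ?_
    ring
end
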